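/- Let n ≥ 1 and let 𝒢 denote the set of real (2n)×(2n) matrices A satisfying Aᵀ = A, A·A = A and trace A = n, equipped with the subspace topology from the space of matrices; 𝒢 parametrizes the Grassmann manifold G_n(ℝ^{2n}) of n-dimensional subspaces of ℝ^{2n} via orthogonal projection matrices, and the involution V ↦ V^⊥ corresponds to A ↦ 1 − A. Then: (i) for every A ∈ 𝒢, also 1 − A ∈ 𝒢; and (ii) there exists a continuous map h : 𝒢 → S^{2n−1} to the unit sphere of ℝ^{2n} such that h(1 − A) = −h(A) for all A ∈ 𝒢. -/

import Mathlib

open Matrix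

/-- The set of symmetric idempotent `2n×2n` matrices of trace `n` parametrizing the
Grassmann manifold `G_n(ℝ^{2n})`. -/
def GrassMat (n : ℕ) : Set (Matrix (Fin (2 * n)) (Fin (2 * n)) ℝ) :=
  {A | Aᵀ = A ∧ A * A = A ∧ A.trace = (n : ℝ)}

/-- Auxiliary: the reflection matrix `2A - 1`. -/
def refMat (n : ℕ) (A : Matrix (Fin (2 * n)) (Fin (2 * n)) ℝ) :
    Matrix (Fin (2 * n)) (Fin (2 * n)) ℝ := (2 : ℝ) • A - 1

lemma refMat_mul_self (n : ℕ) (A : Matrix (Fin (2 * n)) (Fin (2 * n)) ℝ)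
    (hidem : A * A = A) : refMat n A * refMat n A = 1 := by
  unfold refMat
  simp only [sub_mul, mul_sub, smul_mul_assoc, mul_smul_comm, smul_smul, one_mul, mul_one, hidem]
  module

lemma refMat_sym (n : ℕ) (A : Matrix (Fin (2 * n)) (Fin (2 * n)) ℝ)
    (hsym : Aᵀ = A) : (refMat n A)ᵀ = refMat n A := by
  unfold refMat
  simp [transpose_sub, transpose_smul, hsym]

lemma refMat_neg (n : ℕ) (A : Matrix (Fin (2 * n)) (Fin (2 * n)) ℝ) :
    refMat n (1 - A) = -(refMat n A) := by
  unfold refMat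
  simp [smul_sub]
  module

/-- (i) The set of projection matrices parametrizing `G_n(ℝ^{2n})` is closed under the
orthogonal-complement involution `A ↦ 1 − A`, and (ii) there is a continuous map `h` from
it to the sphere `S^{2n−1}` that is equivariant: `h(1 − A) = −h(A)`. -/
theorem grassmann_to_sphere (n : ℕ) (hn : 1 ≤ n) :
    (∀ A ∈ GrassMat n, (1 - A) ∈ GrassMat n) ∧
    ∃ h : (GrassMat n) → Metric.sphere (0 : EuclideanSpace ℝ (Fin (2 * n))) 1,
      Continuous h ∧
      ∀ (A : Matrix (Fin (2 * n)) (Fin (2 * n)) ℝ) (hA : A ∈ GrassMat n)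
        (hA' : (1 - A) ∈ GrassMat n), h ⟨1 - A, hA'⟩ = -h ⟨A, hA⟩ := by
  have hpos : 0 < 2 * n := by omega
  set i0 : Fin (2 * n) := ⟨0, hpos⟩ with hi0
  -- Part (i)
  have part1 : ∀ A ∈ GrassMat n, (1 - A) ∈ GrassMat n := by
    rintro A ⟨hsym, hidem, htr⟩
    refine ⟨?_, ?_, ?_⟩
    · simp [transpose_sub, hsym]
    · have h1 : (1 - A) * (1 - A) = 1 - A - (A - A * A) := by
        simp only [sub_mul, mul_sub, one_mul, mul_one]
        try abel
      rw [h1, hidem]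
      abel
    · have h1 : (1 : Matrix (Fin (2 * n)) (Fin (2 * n)) ℝ).trace = (2 * n : ℝ) := by
        simp [trace_one]
      rw [trace_sub, h1, htr]
      ring
  refine ⟨part1, ?_⟩
  have key : ∀ A ∈ GrassMat n, ∑ i, (refMat n A i i0) ^ 2 = 1 := by
    rintro A ⟨hsym, hidem, htr⟩
    have hM := refMat_mul_self n A hidem
    have hMsym := refMat_sym n A hsym
    have h2 := congrFun (congrFun hM i0) i0
    rw [Matrix.mul_apply, Matrix.one_apply_eq] at h2
    rw [← h2]
    apply Finset.sum_congr rfl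
    intro j _
    have h3 : refMat n A i0 j = refMat n A j i0 := by
      conv_lhs => rw [← hMsym]
      rw [transpose_apply]
    rw [h3]; ring
  set v : (GrassMat n) → EuclideanSpace ℝ (Fin (2 * n)) :=
    fun A => WithLp.toLp 2 (fun i => refMat n A.1 i i0) with hv
  have hvnorm : ∀ A : GrassMat n, ‖v A‖ = 1 := by
    intro A
    rw [EuclideanSpace.norm_eq]
    have h4 : ∀ i, ‖v A i‖ ^ 2 = (refMat n A.1 i i0) ^ 2 := by
      intro i; rw [Real.norm_eq_abs, sq_abs]
    rw [Finset.sum_congr rfl (fun i _ => h4 i), key A.1 A.2]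
    simp
  refine ⟨fun A => ⟨v A, by simp [hvnorm A]⟩, ?_, ?_⟩
  · apply Continuous.subtype_mk
    apply (PiLp.continuous_toLp 2 _).comp
    apply continuous_pi
    intro i
    have : Continuous fun A : GrassMat n => refMat n A.1 i i0 := by
      unfold refMat
      simp only [Matrix.sub_apply, Matrix.smul_apply, smul_eq_mul]
      exact (continuous_const.mul
        ((continuous_subtype_val.matrix_elem i i0))).sub continuous_const
    exact this
  · intro A hA hA'
    ext i
    show refMat n (1 - A) i i0 = -(refMat n A i i0)
    rw [refMat_neg]
    simp
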